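/- For every k ≥ 0 the conjugate gradient iterates satisfy the convergence estimate ‖φ* − φ_k‖ ≤ √(M/m) · e^{−σk} · ‖φ* − φ₀‖ in the norm of H, where σ = log((M+m)/(M−m)). -/

import Mathlib

open scoped RealInnerProductSpace

section Aux
variable {H : Type*} [NormedAddCommGroup H] [InnerProductSpace ℝ H]

/-- Cauchy–Schwarz for a positive symmetric operator form. -/
lemma semiCS (T : H →L[ℝ] H) (hsa : ∀ x y : H, ⟪T x, y⟫ = ⟪x, T y⟫)
    (hpos : ∀ x : H, 0 ≤ ⟪T x, x⟫) (x y : H) :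
    ⟪T x, y⟫ ^ 2 ≤ ⟪T x, x⟫ * ⟪T y, y⟫ := by
  have hsymm : ∀ u v : H, ⟪T u, v⟫ = ⟪T v, u⟫ := by
    intro u v
    rw [hsa u v, real_inner_comm]
  have key : ∀ t : ℝ, 0 ≤ ⟪T y, y⟫ * (t * t) + (2 * ⟪T x, y⟫) * t + ⟪T x, x⟫ := by
    intro t
    have h := hpos (x + t • y)
    have hexp : ⟪T (x + t • y), x + t • y⟫
        = ⟪T y, y⟫ * (t * t) + (2 * ⟪T x, y⟫) * t + ⟪T x, x⟫ := by
      rw [map_add, map_smul]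
      rw [inner_add_left, inner_add_right, inner_add_right]
      rw [real_inner_smul_left, real_inner_smul_left, real_inner_smul_right,
        real_inner_smul_right]
      rw [hsymm y x]
      ring
    linarith [hexp ▸ h]
  have hd := discrim_le_zero key
  rw [discrim] at hd
  nlinarith [hd]

/-- Polarization: a form-symmetric operator with form bound ρ contracts the form by ρ². -/
lemma form_contract (T B : H →L[ℝ] H)
    (hTpos : ∀ x : H, 0 ≤ ⟪T x, x⟫)
    (hBsym : ∀ u v : H, ⟪T (B u), v⟫ = ⟪T u, B v⟫)
    (hTsym : ∀ u v : H, ⟪T u, v⟫ = ⟪T v, u⟫)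
    (ρ : ℝ) (hρ : 0 < ρ)
    (hbound : ∀ x : H, |⟪T (B x), x⟫| ≤ ρ * ⟪T x, x⟫) (x : H) :
    ⟪T (B x), B x⟫ ≤ ρ ^ 2 * ⟪T x, x⟫ := by
  set q : ℝ := ⟪T x, x⟫ with hq
  set qT : ℝ := ⟪T (B x), B x⟫ with hqT
  have hq0 : 0 ≤ q := hTpos x
  have hqT0 : 0 ≤ qT := hTpos (B x)
  have polar : ∀ y : H, 4 * ⟪T (B x), y⟫ ≤ 2 * ρ * (q + ⟪T y, y⟫) := by
    intro y
    have h1 := (abs_le.mp (hbound (x + y))).2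
    have h2 := (abs_le.mp (hbound (x - y))).1
    have e1 : ⟪T (B (x + y)), x + y⟫
        = ⟪T (B x), x⟫ + 2 * ⟪T (B x), y⟫ + ⟪T (B y), y⟫ := by
      rw [map_add, map_add, inner_add_left, inner_add_right, inner_add_right]
      have : ⟪T (B y), x⟫ = ⟪T (B x), y⟫ := by
        rw [hBsym y x, hTsym y (B x)]
      rw [this]; ring
    have e2 : ⟪T (B (x - y)), x - y⟫
        = ⟪T (B x), x⟫ - 2 * ⟪T (B x), y⟫ + ⟪T (B y), y⟫ := by
      rw [map_sub, map_sub, inner_sub_left, inner_sub_right, inner_sub_right]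
      have : ⟪T (B y), x⟫ = ⟪T (B x), y⟫ := by
        rw [hBsym y x, hTsym y (B x)]
      rw [this]; ring
    have e3 : ⟪T (x + y), x + y⟫ = q + 2 * ⟪T x, y⟫ + ⟪T y, y⟫ := by
      rw [map_add, inner_add_left, inner_add_right, inner_add_right, hTsym y x]; ring
    have e4 : ⟪T (x - y), x - y⟫ = q - 2 * ⟪T x, y⟫ + ⟪T y, y⟫ := by
      rw [map_sub, inner_sub_left, inner_sub_right, inner_sub_right, hTsym y x]; ring
    rw [e1, e3] at h1
    rw [e2, e4] at h2
    linarith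
  have key : ∀ t : ℝ, 0 ≤ (2 * ρ * qT) * (t * t) + (-(4 * qT)) * t + 2 * ρ * q := by
    intro t
    have h := polar (t • B x)
    rw [real_inner_smul_right] at h
    have hT : ⟪T (t • B x), t • B x⟫ = t * t * qT := by
      rw [map_smul, real_inner_smul_left, real_inner_smul_right]; ring
    rw [hT] at h
    nlinarith [h]
  have hd := discrim_le_zero key
  rw [discrim] at hd
  rcases eq_or_lt_of_le hqT0 with h0 | h0
  · rw [← h0]; positivity
  · nlinarith [hd, h0]


lemma normAx_le (A : H →L[ℝ] H) (hsa : ∀ x y : H, ⟪A x, y⟫ = ⟪x, A y⟫)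
    (m M : ℝ) (hm : 0 < m)
    (hlow : ∀ x : H, m * ‖x‖ ^ 2 ≤ ⟪A x, x⟫)
    (hupp : ∀ x : H, ⟪A x, x⟫ ≤ M * ‖x‖ ^ 2) (x : H) :
    m * ⟪A x, x⟫ ≤ ‖A x‖ ^ 2 ∧ ‖A x‖ ^ 2 ≤ M * ⟪A x, x⟫ := by
  have hpos : ∀ y : H, 0 ≤ ⟪A y, y⟫ := fun y => le_trans (by positivity) (hlow y)
  constructor
  · -- m * ⟪Ax,x⟫ ≤ ‖Ax‖²
    rcases eq_or_ne x 0 with rfl | hx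
    · simp
    · have h1 : m * ‖x‖ ^ 2 ≤ ⟪A x, x⟫ := hlow x
      have h2 : ⟪A x, x⟫ ≤ ‖A x‖ * ‖x‖ := real_inner_le_norm _ _
      have hxn : 0 < ‖x‖ := norm_pos_iff.mpr hx
      have hmx : m * ‖x‖ ≤ ‖A x‖ := by
        have : m * ‖x‖ * ‖x‖ ≤ ‖A x‖ * ‖x‖ := by nlinarith
        exact le_of_mul_le_mul_right this hxn
      calc m * ⟪A x, x⟫ ≤ m * (‖A x‖ * ‖x‖) := by nlinarith [hpos x, hm]
        _ = (m * ‖x‖) * ‖A x‖ := by ring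
        _ ≤ ‖A x‖ * ‖A x‖ := by
            exact mul_le_mul_of_nonneg_right hmx (norm_nonneg _)
        _ = ‖A x‖ ^ 2 := by ring
  · -- ‖Ax‖² ≤ M ⟪Ax,x⟫
    have hcs := semiCS A hsa hpos x (A x)
    have hAA : ⟪A x, A x⟫ = ‖A x‖ ^ 2 := real_inner_self_eq_norm_sq _
    have hup := hupp (A x)
    rw [hAA] at hcs
    rcases eq_or_ne (A x) 0 with h0 | h0
    · simp [h0]
    · have hn : (0:ℝ) < ‖A x‖ ^ 2 := pow_pos (norm_pos_iff.mpr h0) 2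
      nlinarith [hcs, hup, hpos x, hn]

lemma Bpow_bound (A : H →L[ℝ] H) (hsa : ∀ x y : H, ⟪A x, y⟫ = ⟪x, A y⟫)
    (m M : ℝ) (hm : 0 < m) (hmM : m < M)
    (hlow : ∀ x : H, m * ‖x‖ ^ 2 ≤ ⟪A x, x⟫)
    (hupp : ∀ x : H, ⟪A x, x⟫ ≤ M * ‖x‖ ^ 2) (x : H) (k : ℕ) :
    ⟪A ((((1 : H →L[ℝ] H) - (2/(M+m)) • A) ^ k) x), (((1 : H →L[ℝ] H) - (2/(M+m)) • A) ^ k) x⟫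
      ≤ (((M-m)/(M+m)) ^ k) ^ 2 * ⟪A x, x⟫ := by
  set c : ℝ := 2/(M+m) with hc
  set ρ : ℝ := (M-m)/(M+m) with hρdef
  set B : H →L[ℝ] H := (1 : H →L[ℝ] H) - c • A with hB
  have hMm : (0:ℝ) < M + m := by linarith
  have hρ : 0 < ρ := div_pos (by linarith) hMm
  have hpos : ∀ y : H, 0 ≤ ⟪A y, y⟫ := fun y => le_trans (by positivity) (hlow y)
  have hBx : ∀ y : H, B y = y - c • A y := by
    intro y; simp [hB]
  have hABcomm : ∀ y : H, A (B y) = B (A y) := by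
    intro y; rw [hBx, hBx, map_sub, map_smul]
  have hBsa : ∀ u v : H, ⟪B u, v⟫ = ⟪u, B v⟫ := by
    intro u v
    rw [hBx, hBx, inner_sub_left, inner_sub_right, real_inner_smul_left,
      real_inner_smul_right, hsa]
  have hBsymA : ∀ u v : H, ⟪A (B u), v⟫ = ⟪A u, B v⟫ := by
    intro u v; rw [hABcomm, hBsa]
  have hAsym : ∀ u v : H, ⟪A u, v⟫ = ⟪A v, u⟫ := by
    intro u v; rw [hsa u v, real_inner_comm]
  have hbound : ∀ y : H, |⟪A (B y), y⟫| ≤ ρ * ⟪A y, y⟫ := by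
    intro y
    have hval : ⟪A (B y), y⟫ = ⟪A y, y⟫ - c * ‖A y‖ ^ 2 := by
      rw [hBx, map_sub, map_smul, inner_sub_left, real_inner_smul_left]
      have : ⟪A (A y), y⟫ = ‖A y‖ ^ 2 := by
        rw [hsa, real_inner_self_eq_norm_sq]
      rw [this]
    obtain ⟨hL, hU⟩ := normAx_le A hsa m M hm hlow hupp y
    rw [hval, abs_le]
    constructor
    · have e2 : (⟪A y, y⟫ - c * ‖A y‖ ^ 2) + ρ * ⟪A y, y⟫ = c * (M * ⟪A y, y⟫ - ‖A y‖ ^ 2) := by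
        rw [hc, hρdef]; field_simp; ring
      nlinarith [e2, mul_nonneg (le_of_lt (div_pos two_pos hMm)) (sub_nonneg.mpr hU)]
    · have e1 : ρ * ⟪A y, y⟫ - (⟪A y, y⟫ - c * ‖A y‖ ^ 2) = c * (‖A y‖ ^ 2 - m * ⟪A y, y⟫) := by
        rw [hc, hρdef]; field_simp; ring
      nlinarith [e1, mul_nonneg (le_of_lt (div_pos two_pos hMm)) (sub_nonneg.mpr hL)]
  induction k with
  | zero => simp
  | succ n ih =>
    have hstep : (B ^ (n+1)) x = B ((B ^ n) x) := by
      rw [pow_succ']; rfl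
    rw [hstep]
    calc ⟪A (B ((B ^ n) x)), B ((B ^ n) x)⟫
        ≤ ρ ^ 2 * ⟪A ((B ^ n) x), (B ^ n) x⟫ :=
          form_contract A B hpos hBsymA hAsym ρ hρ hbound _
      _ ≤ ρ ^ 2 * ((ρ ^ n) ^ 2 * ⟪A x, x⟫) := by
          apply mul_le_mul_of_nonneg_left ih (by positivity)
      _ = (ρ ^ (n+1)) ^ 2 * ⟪A x, x⟫ := by ring

end Aux
set_option maxHeartbeats 1600000 in
/-- Convergence of the conjugate gradient method in the norm of `H`:
`‖φ* − φ_k‖ ≤ √(M/m)·e^{−σk}·‖φ* − φ₀‖` with `σ = log((M+m)/(M−m))`. -/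
theorem stmt_12 {H : Type*} [NormedAddCommGroup H] [InnerProductSpace ℝ H] [CompleteSpace H]
    (A : H →L[ℝ] H) (hsa : ∀ x y : H, ⟪A x, y⟫ = ⟪x, A y⟫)
    (m M : ℝ) (hm : 0 < m) (hmM : m < M)
    (hlow : ∀ x : H, m * ‖x‖ ^ 2 ≤ ⟪A x, x⟫)
    (hupp : ∀ x : H, ⟪A x, x⟫ ≤ M * ‖x‖ ^ 2)
    (ζ φstar : H) (hsol : A φstar = ζ)
    (φ r s : ℕ → H)
    (hr0 : r 0 = ζ - A (φ 0)) (hs0 : s 0 = r 0)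
    (hφ : ∀ k, φ (k + 1) = φ k + (‖r k‖ ^ 2 / ⟪s k, A (s k)⟫) • s k)
    (hr : ∀ k, r (k + 1) = ζ - A (φ (k + 1)))
    (hs : ∀ k, s (k + 1) = r (k + 1) + (‖r (k + 1)‖ ^ 2 / ‖r k‖ ^ 2) • s k) :
    ∀ k : ℕ, ‖φstar - φ k‖ ≤
      Real.sqrt (M / m) * Real.exp (-Real.log ((M + m) / (M - m)) * k) * ‖φstar - φ 0‖ := by
  intro k
  have hrk : ∀ n, r n = ζ - A (φ n) := by
    intro n; cases n with
    | zero => exact hr0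
    | succ n => exact hr n
  have hre : ∀ n, r n = A (φstar - φ n) := by
    intro n; rw [map_sub, hsol, hrk]
  have hqpos : ∀ n, s n ≠ 0 → 0 < ⟪s n, A (s n)⟫ := by
    intro n hn
    have h1 := hlow (s n)
    have h2 : (0:ℝ) < m * ‖s n‖ ^ 2 := by
      have := norm_pos_iff.mpr hn; positivity
    have : ⟪A (s n), s n⟫ = ⟪s n, A (s n)⟫ := hsa _ _
    linarith [this ▸ lt_of_lt_of_le h2 h1]
  have hrrec : ∀ n, r (n+1) = r n - (‖r n‖ ^ 2 / ⟪s n, A (s n)⟫) • A (s n) := by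
    intro n
    rw [hr n, hφ n, map_add, map_smul, hrk n]
    abel
  by_cases hzero : ∃ i ≤ k, r i = 0
  · -- trivial branch: exact solution already reached
    obtain ⟨i, hik, hri⟩ := hzero
    have freeze : ∀ d, φ (i + d) = φ i ∧ r (i + d) = 0 ∧ s (i + d) = 0 := by
      intro d
      induction d with
      | zero =>
        refine ⟨rfl, hri, ?_⟩
        cases i with
        | zero => rw [hs0, hri]
        | succ i =>
          rw [hs i, hri]
          simp
      | succ d ih =>
        obtain ⟨hφd, hrd, hsd⟩ := ih
        have h1 : φ (i + d + 1) = φ i := by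
          rw [hφ (i + d), hsd, smul_zero, add_zero, hφd]
        have h2 : r (i + d + 1) = 0 := by
          rw [hrk (i + d + 1), h1, ← hrk i, hri]
        have h3 : s (i + d + 1) = 0 := by
          rw [hs (i + d), h2, hsd, smul_zero, add_zero]
        exact ⟨by rw [show i + (d+1) = i + d + 1 from rfl, h1],
          by rw [show i + (d+1) = i + d + 1 from rfl, h2],
          by rw [show i + (d+1) = i + d + 1 from rfl, h3]⟩
    have hφk : φ k = φ i := by
      obtain ⟨d, rfl⟩ := Nat.exists_eq_add_of_le hik
      exact (freeze d).1
    have hstar : φstar = φ i := by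
      have h0 : A (φstar - φ i) = 0 := by rw [← hre i, hri]
      have h1 := hlow (φstar - φ i)
      rw [h0] at h1
      simp only [inner_zero_left] at h1
      have : ‖φstar - φ i‖ ^ 2 ≤ 0 := by nlinarith
      have : φstar - φ i = 0 := by
        have := norm_nonneg (φstar - φ i)
        have hn : ‖φstar - φ i‖ = 0 := by nlinarith
        exact norm_eq_zero.mp hn
      exact sub_eq_zero.mp this
    rw [hφk, ← hstar, sub_self, norm_zero]
    positivity
  · push_neg at hzero
    have hnz : ∀ i, i ≤ k → r i ≠ 0 := hzero
    have hrn2 : ∀ i, i ≤ k → (0:ℝ) < ‖r i‖ ^ 2 := by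
      intro i hi
      have := norm_pos_iff.mpr (hnz i hi)
      positivity
    have ortho : ∀ n, n ≤ k →
        (∀ j, j < n → ⟪r n, r j⟫ = 0) ∧ (∀ j, j < n → ⟪r n, s j⟫ = 0) ∧
        (⟪r n, s n⟫ = ‖r n‖ ^ 2) ∧ (∀ j, j < n → ⟪s n, A (s j)⟫ = 0) := by
      intro n
      induction n using Nat.strong_induction_on with
      | _ n ih =>
        intro hnk
        match n with
        | 0 =>
          refine ⟨fun j hj => absurd hj (Nat.not_lt_zero j),
            fun j hj => absurd hj (Nat.not_lt_zero j), ?_,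
            fun j hj => absurd hj (Nat.not_lt_zero j)⟩
          rw [hs0, real_inner_self_eq_norm_sq]
        | (n+1) =>
          obtain ⟨O1n, O2n, O3n, O4n⟩ := ih n (Nat.lt_succ_self n) (by omega)
          have hrn : r n ≠ 0 := hnz n (by omega)
          have hrn2' : (0:ℝ) < ‖r n‖ ^ 2 := hrn2 n (by omega)
          have hsn : s n ≠ 0 := by
            intro h
            rw [h, inner_zero_right] at O3n
            exact absurd O3n.symm (ne_of_gt hrn2')
          have hqn : 0 < ⟪s n, A (s n)⟫ := hqpos n hsn
          have hrec := hrrec n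
          have O2' : ∀ j, j < n + 1 → ⟪r (n+1), s j⟫ = 0 := by
            intro j hj
            rw [hrec, inner_sub_left, real_inner_smul_left]
            rcases Nat.lt_succ_iff_lt_or_eq.mp hj with hj' | rfl
            · rw [O2n j hj', hsa, O4n j hj', mul_zero, sub_zero]
            · rw [O3n, hsa, div_mul_cancel₀ _ (ne_of_gt hqn), sub_self]
          have O1' : ∀ j, j < n + 1 → ⟪r (n+1), r j⟫ = 0 := by
            intro j hj
            cases j with
            | zero => rw [← hs0]; exact O2' 0 hj
            | succ j' =>
              have hrj : r (j'+1) = s (j'+1) - (‖r (j'+1)‖ ^ 2 / ‖r j'‖ ^ 2) • s j' := by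
                rw [hs j']; abel
              rw [hrj, inner_sub_right, real_inner_smul_right,
                O2' (j'+1) hj, O2' j' (by omega), mul_zero, sub_zero]
          have O3' : ⟪r (n+1), s (n+1)⟫ = ‖r (n+1)‖ ^ 2 := by
            rw [hs n, inner_add_right, real_inner_smul_right,
              O2' n (Nat.lt_succ_self n), real_inner_self_eq_norm_sq, mul_zero, add_zero]
          have O4' : ∀ j, j < n + 1 → ⟪s (n+1), A (s j)⟫ = 0 := by
            intro j hj
            rw [hs n, inner_add_left, real_inner_smul_left]
            rcases Nat.lt_succ_iff_lt_or_eq.mp hj with hj' | rfl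
            · -- j < n
              have O3j : ⟪r j, s j⟫ = ‖r j‖ ^ 2 := (ih j (by omega) (by omega)).2.2.1
              have hrj2 : (0:ℝ) < ‖r j‖ ^ 2 := hrn2 j (by omega)
              have hsj : s j ≠ 0 := by
                intro h
                rw [h, inner_zero_right] at O3j
                exact absurd O3j.symm (ne_of_gt hrj2)
              have hqj : 0 < ⟪s j, A (s j)⟫ := hqpos j hsj
              have haj : (0:ℝ) < ‖r j‖ ^ 2 / ⟪s j, A (s j)⟫ := div_pos hrj2 hqj
              have hAsj : (‖r j‖ ^ 2 / ⟪s j, A (s j)⟫) • A (s j) = r j - r (j+1) := by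
                rw [hrrec j]; abel
              have h1 : (‖r j‖ ^ 2 / ⟪s j, A (s j)⟫) * ⟪r (n+1), A (s j)⟫ = 0 := by
                rw [← real_inner_smul_right, hAsj, inner_sub_right,
                  O1' j (by omega), O1' (j+1) (by omega), sub_zero]
              have h2 : ⟪r (n+1), A (s j)⟫ = 0 :=
                (mul_eq_zero.mp h1).resolve_left (ne_of_gt haj)
              rw [h2, O4n j hj', mul_zero, add_zero]
            · -- j = n
              have hAsn : (‖r j‖ ^ 2 / ⟪s j, A (s j)⟫) • A (s j) = r j - r (j+1) := by
                rw [hrrec j]; abel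
              have h1 : (‖r j‖ ^ 2 / ⟪s j, A (s j)⟫) * ⟪r (j+1), A (s j)⟫
                  = -‖r (j+1)‖ ^ 2 := by
                rw [← real_inner_smul_right, hAsn, inner_sub_right,
                  O1' j (Nat.lt_succ_self j), real_inner_self_eq_norm_sq, zero_sub]
              have h2 : ⟪r (j+1), A (s j)⟫
                  = -‖r (j+1)‖ ^ 2 * ⟪s j, A (s j)⟫ / ‖r j‖ ^ 2 := by
                field_simp at h1 ⊢
                nlinarith [h1]
              rw [h2]
              field_simp
              ring
          exact ⟨O1', O2', O3', O4'⟩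
    -- submodules spanned by the search directions
    set S : ℕ → Submodule ℝ H := fun n => Submodule.span ℝ {x | ∃ j, j < n ∧ s j = x}
      with hSdef
    have hSmono : ∀ {p q : ℕ}, p ≤ q → S p ≤ S q := by
      intro p q hpq
      apply Submodule.span_mono
      rintro x ⟨j, hj, rfl⟩
      exact ⟨j, lt_of_lt_of_le hj hpq, rfl⟩
    have hsmem : ∀ j n, j < n → s j ∈ S n := fun j n hj => Submodule.subset_span ⟨j, hj, rfl⟩
    have hφmem : ∀ n, φ n - φ 0 ∈ S n := by
      intro n
      induction n with
      | zero => rw [sub_self]; exact zero_mem _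
      | succ n ihn =>
        have h1 : φ (n+1) - φ 0
            = (φ n - φ 0) + (‖r n‖ ^ 2 / ⟪s n, A (s n)⟫) • s n := by
          rw [hφ n]; abel
        rw [h1]
        exact add_mem (hSmono (Nat.le_succ n) ihn)
          (Submodule.smul_mem _ _ (hsmem n (n+1) (Nat.lt_succ_self n)))
    have hrmem : ∀ n, r n ∈ S (n+1) := by
      intro n
      cases n with
      | zero => rw [← hs0]; exact hsmem 0 1 Nat.zero_lt_one
      | succ n =>
        have h1 : r (n+1) = s (n+1) - (‖r (n+1)‖ ^ 2 / ‖r n‖ ^ 2) • s n := by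
          rw [hs n]; abel
        rw [h1]
        exact sub_mem (hsmem (n+1) (n+2) (by omega))
          (Submodule.smul_mem _ _ (hsmem n (n+2) (by omega)))
    have hAsmem : ∀ i, i < k → A (s i) ∈ S (i+2) := by
      intro i hik2
      have O3i := (ortho i (by omega)).2.2.1
      have hri2 := hrn2 i (by omega)
      have hsi : s i ≠ 0 := by
        intro h
        rw [h, inner_zero_right] at O3i
        exact absurd O3i.symm (ne_of_gt hri2)
      have hqi := hqpos i hsi
      have ha : (0:ℝ) < ‖r i‖ ^ 2 / ⟪s i, A (s i)⟫ := div_pos hri2 hqi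
      have hAsi : (‖r i‖ ^ 2 / ⟪s i, A (s i)⟫) • A (s i) = r i - r (i+1) := by
        rw [hrrec i]; abel
      have h2 : A (s i) = (‖r i‖ ^ 2 / ⟪s i, A (s i)⟫)⁻¹ • (r i - r (i+1)) := by
        rw [← hAsi, smul_smul, inv_mul_cancel₀ (ne_of_gt ha), one_smul]
      rw [h2]
      exact Submodule.smul_mem _ _
        (sub_mem (hSmono (by omega) (hrmem i)) (hrmem (i+1)))
    have hAmap : ∀ n, n ≤ k → ∀ x ∈ S n, A x ∈ S (n+1) := by
      intro n hnk x hx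
      refine Submodule.span_induction ?_ ?_ ?_ ?_ hx
      · rintro x ⟨j, hj, rfl⟩
        exact hSmono (by omega) (hAsmem j (by omega))
      · rw [map_zero]; exact zero_mem _
      · intro a b _ _ ha hb
        rw [map_add]; exact add_mem ha hb
      · intro t a _ ha
        rw [map_smul]; exact Submodule.smul_mem _ _ ha
    -- the auxiliary operator B
    set c : ℝ := 2/(M+m) with hc
    set B : H →L[ℝ] H := (1 : H →L[ℝ] H) - c • A with hBdef
    set e0 : H := φstar - φ 0 with he0
    set ek : H := φstar - φ k with hek
    have hAe0 : A e0 = r 0 := (hre 0).symm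
    have hBy : ∀ y, B y = y - c • A y := by intro y; simp [hBdef]
    have hTmem : ∀ n, n ≤ k → (B ^ n) e0 - e0 ∈ S n := by
      intro n
      induction n with
      | zero =>
        intro _
        rw [pow_zero, ContinuousLinearMap.one_apply, sub_self]
        exact zero_mem _
      | succ n ihn =>
        intro hnk
        have hn : n ≤ k := by omega
        have h1 : (B ^ (n+1)) e0 = (B ^ n) e0 - c • A ((B ^ n) e0) := by
          rw [pow_succ', ContinuousLinearMap.mul_apply, hBy]
        have h2 : (B ^ (n+1)) e0 - e0
            = (((B ^ n) e0 - e0) - c • (A ((B ^ n) e0 - e0))) - c • r 0 := by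
          rw [h1]
          simp only [map_sub, hAe0]
          module
        rw [h2]
        exact sub_mem (sub_mem (hSmono (Nat.le_succ n) (ihn hn))
            (Submodule.smul_mem _ _ (hAmap n hn _ (ihn hn))))
          (Submodule.smul_mem _ _ (hSmono (by omega) (hrmem 0)))
    have O2k := (ortho k le_rfl).2.1
    have hperp : ∀ w ∈ S k, ⟪r k, w⟫ = 0 := by
      intro w hw
      refine Submodule.span_induction ?_ ?_ ?_ ?_ hw
      · rintro x ⟨j, hj, rfl⟩
        exact O2k j hj
      · exact inner_zero_right _
      · intro a b _ _ ha hb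
        rw [inner_add_right, ha, hb, add_zero]
      · intro t a _ ha
        rw [real_inner_smul_right, ha, mul_zero]
    have hAek : A ek = r k := (hre k).symm
    have hwmem : (B ^ k) e0 - ek ∈ S k := by
      have h1 : (B ^ k) e0 - ek = ((B ^ k) e0 - e0) + (φ k - φ 0) := by
        rw [he0, hek]; abel
      rw [h1]
      exact add_mem (hTmem k le_rfl) (hφmem k)
    have hkey : ⟪A ek, ek⟫ ≤ ⟪A ((B ^ k) e0), (B ^ k) e0⟫ := by
      have hw0 : ⟪r k, (B ^ k) e0 - ek⟫ = 0 := hperp _ hwmem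
      have hBke : (B ^ k) e0 = ek + ((B ^ k) e0 - ek) := by abel
      have hexp2 : ⟪A ((B ^ k) e0), (B ^ k) e0⟫
          = ⟪A ek, ek⟫ + 2 * ⟪r k, (B ^ k) e0 - ek⟫
            + ⟪A ((B ^ k) e0 - ek), (B ^ k) e0 - ek⟫ := by
        conv_lhs => rw [hBke]
        rw [map_add, inner_add_left, inner_add_right, inner_add_right]
        have hcross : ⟪A ((B ^ k) e0 - ek), ek⟫ = ⟪A ek, (B ^ k) e0 - ek⟫ := by
          rw [hsa, real_inner_comm]
        rw [hcross, hAek]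
        ring
      have hpos2 : 0 ≤ ⟪A ((B ^ k) e0 - ek), (B ^ k) e0 - ek⟫ :=
        le_trans (by positivity) (hlow _)
      rw [hexp2, hw0]
      linarith
    have hρpos : (0:ℝ) < (M - m)/(M + m) := div_pos (by linarith) (by linarith)
    have hcontr := Bpow_bound A hsa m M hm hmM hlow hupp e0 k
    rw [← hc, ← hBdef] at hcontr
    have h1 := hlow ek
    have h2 := hupp e0
    have hq0 : (0:ℝ) ≤ ⟪A e0, e0⟫ := le_trans (by positivity) (hlow e0)
    have hchain : m * ‖ek‖ ^ 2 ≤ (((M-m)/(M+m)) ^ k) ^ 2 * (M * ‖e0‖ ^ 2) := by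
      have hch := le_trans hkey hcontr
      have hmul : (((M-m)/(M+m)) ^ k) ^ 2 * ⟪A e0, e0⟫
          ≤ (((M-m)/(M+m)) ^ k) ^ 2 * (M * ‖e0‖ ^ 2) :=
        mul_le_mul_of_nonneg_left h2 (sq_nonneg _)
      linarith
    have hexpval : Real.exp (-Real.log ((M + m) / (M - m)) * k) = ((M-m)/(M+m)) ^ k := by
      have hfrac : (0:ℝ) < (M+m)/(M-m) := div_pos (by linarith) (by linarith)
      rw [mul_comm (-Real.log ((M + m) / (M - m))) (k:ℝ), Real.exp_nat_mul, Real.exp_neg, Real.exp_log hfrac, inv_div]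
    rw [hexpval]
    have hsq : ‖ek‖ ^ 2 ≤ (Real.sqrt (M/m) * ((M-m)/(M+m)) ^ k * ‖e0‖) ^ 2 := by
      have hs2 : Real.sqrt (M/m) ^ 2 = M/m := Real.sq_sqrt (le_of_lt (div_pos (by linarith) hm))
      rw [mul_pow, mul_pow, hs2]
      have heq : M/m * (((M-m)/(M+m)) ^ k) ^ 2 * ‖e0‖ ^ 2
          = ((((M-m)/(M+m)) ^ k) ^ 2 * (M * ‖e0‖ ^ 2)) / m := by
        field_simp
      rw [heq, le_div_iff₀ hm]
      linarith [hchain]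
    calc ‖ek‖ = Real.sqrt (‖ek‖ ^ 2) := (Real.sqrt_sq (norm_nonneg _)).symm
      _ ≤ Real.sqrt ((Real.sqrt (M/m) * ((M-m)/(M+m)) ^ k * ‖e0‖) ^ 2) :=
          Real.sqrt_le_sqrt hsq
      _ = Real.sqrt (M/m) * ((M-m)/(M+m)) ^ k * ‖e0‖ := Real.sqrt_sq (by positivity)
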